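/- arXiv:2211.00328 — 2 statements merged into one kernel-verified Lean document; each statement's English description precedes it below -/
import Mathlib

section
/- There exists a lower triangular matrix Ĉ ∈ ℝ^{m×m}, whose first and last rows and whose first column are zero and whose diagonal entries Ĉ_{ii} = 1 for 2 ≤ i ≤ m-1, such that Ā_S = Ĉ A. -/
open Matrix Filter

noncomputable def projMat {n : ℕ} (a : Fin n → ℝ) : Matrix (Fin n) (Fin n) ℝ :=
  1 - (a ⬝ᵥ a)⁻¹ • Matrix.vecMulVec a a

noncomputable def vnorm {n : ℕ} (x : Fin n → ℝ) : ℝ := Real.sqrt (x ⬝ᵥ x)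

/-- `x ∈ N(A)^⊥`: `x` is orthogonal to every vector of the null space of `A`. -/
def inNullPerp {m n : ℕ} (A : Matrix (Fin m) (Fin n) ℝ) (x : Fin n → ℝ) : Prop :=
  ∀ z : Fin n → ℝ, A.mulVec z = 0 → x ⬝ᵥ z = 0

/-- `P_k` (0-indexed): the projection onto the hyperplane orthogonal to row `k` of `A`. -/
noncomputable def Pnat {m n : ℕ} (A : Matrix (Fin m) (Fin n) ℝ) (k : ℕ) :
    Matrix (Fin n) (Fin n) ℝ :=
  if h : k < m then projMat (A ⟨k, h⟩) else 1

/-- descending product `f (lo+len-1) * ⋯ * f (lo+1) * f lo` -/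
noncomputable def prodDesc {α : Type*} [Monoid α] (f : ℕ → α) (lo : ℕ) : ℕ → α
  | 0 => 1
  | k + 1 => f (lo + k) * prodDesc f lo k

/-- ascending product `f lo * f (lo+1) * ⋯ * f (lo+len-1)` -/
noncomputable def prodAsc {α : Type*} [Monoid α] (f : ℕ → α) (lo : ℕ) : ℕ → α
  | 0 => 1
  | k + 1 => prodAsc f lo k * f (lo + k)

/-- `Q_j = P_m ⋯ P_{j+1}` (paper indices); here `j : Fin m` is 0-indexed. -/
noncomputable def Qmat {m n : ℕ} (A : Matrix (Fin m) (Fin n) ℝ) (j : Fin m) :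
    Matrix (Fin n) (Fin n) ℝ :=
  prodDesc (Pnat A) ((j : ℕ) + 1) (m - 1 - (j : ℕ))

/-- `Q = P_m P_{m-1} ⋯ P_1`. -/
noncomputable def Qfull {m n : ℕ} (A : Matrix (Fin m) (Fin n) ℝ) : Matrix (Fin n) (Fin n) ℝ :=
  prodDesc (Pnat A) 0 m

/-- `A_S = (Q_1 a_1, …, Q_m a_m)ᵀ`. -/
noncomputable def ASmat {m n : ℕ} (A : Matrix (Fin m) (Fin n) ℝ) : Matrix (Fin m) (Fin n) ℝ :=
  fun i => (Qmat A i).mulVec (A i)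

/-- `M = diag (1/‖a_1‖², …, 1/‖a_m‖²)`. -/
noncomputable def Mdiag {m n : ℕ} (A : Matrix (Fin m) (Fin n) ℝ) : Matrix (Fin m) (Fin m) ℝ :=
  Matrix.diagonal fun i => (A i ⬝ᵥ A i)⁻¹

/-- `Q̄_1 = Q̄_m = 0`, `Q̄_2 = I`, `Q̄_i = P_2 ⋯ P_{i-1}` (paper indices); `i : Fin m` 0-indexed. -/
noncomputable def barQmat {m n : ℕ} (A : Matrix (Fin m) (Fin n) ℝ) (i : Fin m) :
    Matrix (Fin n) (Fin n) ℝ :=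
  if (i : ℕ) = 0 ∨ (i : ℕ) = m - 1 then 0 else prodAsc (Pnat A) 1 ((i : ℕ) - 1)

/-- `Q̄ = P_2 P_3 ⋯ P_{m-1}`. -/
noncomputable def barQfull {m n : ℕ} (A : Matrix (Fin m) (Fin n) ℝ) : Matrix (Fin n) (Fin n) ℝ :=
  prodAsc (Pnat A) 1 (m - 2)

/-- `Ā_S = (Q̄_1 a_1, …, Q̄_m a_m)ᵀ`. -/
noncomputable def barASmat {m n : ℕ} (A : Matrix (Fin m) (Fin n) ℝ) : Matrix (Fin m) (Fin n) ℝ :=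
  fun i => (barQmat A i).mulVec (A i)

/-- `h_{p,q} = a_pᵀ a_q / ‖a_q‖²`. -/
noncomputable def hcoef {m n : ℕ} (A : Matrix (Fin m) (Fin n) ℝ) (p q : Fin m) : ℝ :=
  (A p ⬝ᵥ A q) / (A q ⬝ᵥ A q)


private lemma projMat_mulVec {n : ℕ} (a x : Fin n → ℝ) :
    (projMat a).mulVec x = x - ((a ⬝ᵥ a)⁻¹ * (a ⬝ᵥ x)) • a := by
  have hv : (Matrix.vecMulVec a a).mulVec x = (a ⬝ᵥ x) • a := by
    funext i
    simp only [Matrix.mulVec, Matrix.vecMulVec, dotProduct, Pi.smul_apply, smul_eq_mul,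
      Matrix.of_apply, Finset.sum_mul, Finset.mul_sum]
    apply Finset.sum_congr rfl
    intro j _
    ring
  rw [projMat, Matrix.sub_mulVec, Matrix.one_mulVec, Matrix.smul_mulVec, hv,
    smul_smul]

private lemma key_lemma {m n : ℕ} (A : Matrix (Fin m) (Fin n) ℝ) :
    ∀ (k : ℕ) (x : Fin n → ℝ), ∃ c : Fin m → ℝ,
      (∀ j : Fin m, (j : ℕ) = 0 ∨ k < (j : ℕ) → c j = 0) ∧
      (prodAsc (Pnat A) 1 k).mulVec x = x + ∑ j, c j • A j := by
  intro k
  induction k with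
  | zero =>
    intro x
    exact ⟨0, fun j _ => rfl, by simp [prodAsc]⟩
  | succ k ih =>
    intro x
    have hstep : prodAsc (Pnat A) 1 (k + 1)
        = prodAsc (Pnat A) 1 k * Pnat A (1 + k) := rfl
    by_cases h : 1 + k < m
    · set j0 : Fin m := ⟨1 + k, h⟩ with hj0
      obtain ⟨t, ht⟩ : ∃ t : ℝ, t = (A j0 ⬝ᵥ A j0)⁻¹ * (A j0 ⬝ᵥ x) := ⟨_, rfl⟩
      have hP : (Pnat A (1 + k)).mulVec x = x - t • A j0 := by
        rw [Pnat, dif_pos h, ht]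
        exact projMat_mulVec _ _
      obtain ⟨c, hc, hEq⟩ := ih (x - t • A j0)
      have hcj0 : c j0 = 0 := hc j0 (Or.inr (by simp [hj0]))
      refine ⟨fun j => if j = j0 then -t else c j, ?_, ?_⟩
      · intro j hj
        have hne : j ≠ j0 := by
          rintro rfl
          simp only [hj0] at hj
          omega
        simp only [if_neg hne]
        refine hc j ?_
        rcases hj with h1 | h1
        · exact Or.inl h1
        · exact Or.inr (by omega)
      · rw [hstep, ← Matrix.mulVec_mulVec, hP, hEq]
        have hsum : ∑ j, (if j = j0 then -t else c j) • A j
            = (∑ j, c j • A j) + (-t) • A j0 := by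
          have : ∀ j : Fin m, (if j = j0 then -t else c j) • A j
              = c j • A j + (if j = j0 then -t else 0) • A j := by
            intro j
            by_cases hjj : j = j0
            · subst hjj; simp [hcj0]
            · simp [hjj]
          rw [Finset.sum_congr rfl fun j _ => this j, Finset.sum_add_distrib]
          congr 1
          rw [Finset.sum_eq_single j0]
          · simp
          · intro b _ hb; simp [hb]
          · intro hb; exact absurd (Finset.mem_univ j0) hb
        rw [hsum, neg_smul]
        abel
    · have hP : Pnat A (1 + k) = 1 := by rw [Pnat, dif_neg h]
      obtain ⟨c, hc, hEq⟩ := ih x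
      refine ⟨c, fun j hj => hc j ?_, ?_⟩
      · rcases hj with h1 | h1
        · exact Or.inl h1
        · exact Or.inr (by omega)
      · rw [hstep, hP, mul_one, hEq]

/-- there is a lower triangular `Ĉ` with zero first and last rows, zero first
column, unit diagonal entries for `2 ≤ i ≤ m-1` (paper indexing), and `Ā_S = Ĉ A`. -/
theorem stmt9 {m n : ℕ} (A : Matrix (Fin m) (Fin n) ℝ) (hm : 3 ≤ m)
    (hA : ∀ i, A i ≠ 0) :
    ∃ C : Matrix (Fin m) (Fin m) ℝ,
      (∀ i j : Fin m, i < j → C i j = 0) ∧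
      (∀ j : Fin m, C ⟨0, by omega⟩ j = 0) ∧
      (∀ j : Fin m, C ⟨m - 1, by omega⟩ j = 0) ∧
      (∀ i : Fin m, C i ⟨0, by omega⟩ = 0) ∧
      (∀ i : Fin m, 1 ≤ (i : ℕ) → (i : ℕ) ≤ m - 2 → C i i = 1) ∧
      barASmat A = C * A := by
  classical
  have key := key_lemma A
  set c : Fin m → Fin m → ℝ := fun i => Classical.choose (key ((i : ℕ) - 1) (A i)) with hc
  have cspec : ∀ i : Fin m,
      (∀ j : Fin m, (j : ℕ) = 0 ∨ (i : ℕ) - 1 < (j : ℕ) → c i j = 0) ∧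
      (prodAsc (Pnat A) 1 ((i : ℕ) - 1)).mulVec (A i) = A i + ∑ j, c i j • A j :=
    fun i => Classical.choose_spec (key ((i : ℕ) - 1) (A i))
  refine ⟨fun i j => if (i : ℕ) = 0 ∨ (i : ℕ) = m - 1 then 0
      else (if j = i then 1 else 0) + c i j, ?_, ?_, ?_, ?_, ?_, ?_⟩
  · intro i j hij
    by_cases hi : (i : ℕ) = 0 ∨ (i : ℕ) = m - 1
    · simp [hi]
    · have hji : j ≠ i := ne_of_gt hij
      have : c i j = 0 := (cspec i).1 j (Or.inr (by
        have := Fin.lt_iff_val_lt_val.mp hij; omega))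
      simp [hi, hji, this]
  · intro j; simp
  · intro j; simp
  · intro i
    by_cases hi : (i : ℕ) = 0 ∨ (i : ℕ) = m - 1
    · simp [hi]
    · have hne : (⟨0, by omega⟩ : Fin m) ≠ i := by
        intro hh
        exact (not_or.mp hi).1 (by rw [← hh])
      have : c i ⟨0, by omega⟩ = 0 := (cspec i).1 _ (Or.inl rfl)
      simp [hi, hne, this]
  · intro i h1 h2
    have hi : ¬((i : ℕ) = 0 ∨ (i : ℕ) = m - 1) := by omega
    have : c i i = 0 := (cspec i).1 i (Or.inr (by omega))
    simp [hi, this]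
  · funext i k
    by_cases hi : (i : ℕ) = 0 ∨ (i : ℕ) = m - 1
    · simp [barASmat, barQmat, if_pos hi, Matrix.mul_apply, hi]
      erw [Matrix.mul_apply]; simp [hi]
    · have hQ : barQmat A i = prodAsc (Pnat A) 1 ((i : ℕ) - 1) := by
        rw [barQmat, if_neg hi]
      have := (cspec i).2
      rw [barASmat, hQ, this]
      erw [Matrix.mul_apply]; simp only [if_neg hi]
      rw [Finset.sum_congr rfl (fun j _ => add_mul _ _ _), Finset.sum_add_distrib]
      have h1 : ∑ j, (if j = i then (1:ℝ) else 0) * A j k = A i k := by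
        rw [Finset.sum_eq_single i]
        · simp
        · intro b _ hb; simp [hb]
        · intro hb; exact absurd (Finset.mem_univ i) hb
      rw [h1]
      simp [Finset.sum_apply, Pi.smul_apply, smul_eq_mul]
end

section
/- The compatible matrix Ω admits the factorization Ω = H_1 H_2 ⋯ H_m, where H_1 = I and for 1 < i ≤ m, H_i = Π_{j=1}^{i-1} E(j, i, -h_{j,i}), with E(j, i, c) the elementary matrix equal to the identity except for entry c in position (j,i). -/
open Matrix Filter

/-- The compatible matrix `Ω`: `ω_{ii} = 1`, `ω_{ij} = 0` for `j < i`, and for `j > i`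
`ω_{ij} = Σ_{v=2}^{j-i+1} (-1)^{v-1} Σ_{chains i = k₁ < ⋯ < k_v = j} Π_s h_{k_s,k_{s+1}}`
(here the outer sum variable is shifted: `v = w + 2`, `w ∈ range (j - i)`). -/
noncomputable def OmegaMat {m n : ℕ} (A : Matrix (Fin m) (Fin n) ℝ) :
    Matrix (Fin m) (Fin m) ℝ :=
  fun i j =>
    if i = j then 1
    else if j < i then 0
    else ∑ w ∈ Finset.range ((j : ℕ) - (i : ℕ)), (-1 : ℝ) ^ (w + 1) *
      ∑ c : Fin (w + 2) → Fin m,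
        if (∀ s t : Fin (w + 2), s < t → c s < c t) ∧ c 0 = i ∧ c (Fin.last (w + 1)) = j
        then ∏ s : Fin (w + 1), hcoef A (c s.castSucc) (c s.succ) else 0

/-- The elementary matrix `E(j,i,c)`: identity except entry `c` at position `(j,i)`. -/
noncomputable def Efac {m : ℕ} (j i : Fin m) (c : ℝ) : Matrix (Fin m) (Fin m) ℝ :=
  1 + Matrix.single j i c

/-- `H_i = Π_{j=1}^{i-1} E(j, i, -h_{j,i})` (paper indexing; here `i : Fin m` 0-indexed). -/
noncomputable def Hfac {m n : ℕ} (A : Matrix (Fin m) (Fin n) ℝ) (i : Fin m) :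
    Matrix (Fin m) (Fin m) ℝ :=
  prodAsc (fun j => if hj : j < (i : ℕ) then
      Efac ⟨j, hj.trans i.isLt⟩ i (-(hcoef A ⟨j, hj.trans i.isLt⟩ i)) else 1) 0 (i : ℕ)

section ChainAux

variable {m n : ℕ} (A : Matrix (Fin m) (Fin n) ℝ)

/-- Sum over strictly increasing chains of length `w+2` from `p` to `k`. -/
noncomputable def chainSum (p k : Fin m) (w : ℕ) : ℝ :=
  ∑ c : Fin (w + 2) → Fin m,
    if (∀ s t : Fin (w + 2), s < t → c s < c t) ∧ c 0 = p ∧ c (Fin.last (w + 1)) = k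
    then ∏ s : Fin (w + 1), hcoef A (c s.castSucc) (c s.succ) else 0

lemma OmegaMat_eq_chain (p k : Fin m) (h : p < k) :
    OmegaMat A p k = ∑ w ∈ Finset.range ((k : ℕ) - (p : ℕ)),
      (-1 : ℝ) ^ (w + 1) * chainSum A p k w := by
  rw [OmegaMat, if_neg h.ne, if_neg h.asymm]
  rfl

lemma chainSum_eq_zero (p k : Fin m) (w : ℕ) (h : (k : ℕ) < (p : ℕ) + w + 1) :
    chainSum A p k w = 0 := by
  unfold chainSum
  apply Finset.sum_eq_zero
  intro c _
  rw [if_neg]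
  rintro ⟨hmono, h0, hl⟩
  have key : ∀ s : Fin (w + 2), (p : ℕ) + (s : ℕ) ≤ (c s : ℕ) := by
    intro s
    induction s using Fin.induction with
    | zero => simp [h0]
    | succ i ih =>
      have h1 : c i.castSucc < c i.succ := hmono _ _ Fin.castSucc_lt_succ
      have h2 : (c i.castSucc : ℕ) < (c i.succ : ℕ) := h1
      have h3 : ((i.castSucc : Fin (w+2)) : ℕ) = (i : ℕ) := rfl
      have h4 : ((i.succ : Fin (w+2)) : ℕ) = (i : ℕ) + 1 := rfl
      omega
  have := key (Fin.last (w + 1))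
  rw [hl] at this
  simp only [Fin.val_last] at this
  omega

lemma chainSum_zero (p k : Fin m) (h : p < k) :
    chainSum A p k 0 = hcoef A p k := by
  unfold chainSum
  rw [Fintype.sum_eq_single (![p, k])]
  · rw [if_pos]
    · simp
    · refine ⟨?_, by simp, by simp [Fin.last]⟩
      intro s t hst
      fin_cases s <;> fin_cases t <;> simp_all
  · intro c hc
    rw [if_neg]
    rintro ⟨_, h0, hl⟩
    apply hc
    funext s
    fin_cases s
    · simpa using h0
    · simpa [Fin.last] using hl

lemma strictMono_snoc_iff {w : ℕ} (c : Fin (w + 2) → Fin m) (r : Fin m) :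
    (∀ s t : Fin (w + 3), s < t → (Fin.snoc c r : Fin (w + 3) → Fin m) s < (Fin.snoc c r : Fin (w + 3) → Fin m) t) ↔
    (∀ s t : Fin (w + 2), s < t → c s < c t) ∧ c (Fin.last (w + 1)) < r := by
  constructor
  · intro h
    refine ⟨fun s t hst => ?_, ?_⟩
    · have := h s.castSucc t.castSucc (by simpa using hst)
      simpa [Fin.snoc_castSucc] using this
    · have := h (Fin.last (w + 1)).castSucc (Fin.last (w + 2)) (Fin.castSucc_lt_last _)
      simpa [Fin.snoc_castSucc, Fin.snoc_last] using this
  · rintro ⟨hm, hr⟩ s t hst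
    induction t using Fin.lastCases with
    | last =>
      rw [Fin.snoc_last]
      induction s using Fin.lastCases with
      | last => exact absurd hst (lt_irrefl _)
      | cast s' =>
        rw [Fin.snoc_castSucc]
        rcases eq_or_lt_of_le (Fin.le_last s') with h' | h'
        · rwa [h']
        · exact (hm _ _ h').trans hr
    | cast t' =>
      induction s using Fin.lastCases with
      | last => exact absurd (hst.trans_le (Fin.le_last _)) (lt_irrefl _)
      | cast s' =>
        rw [Fin.snoc_castSucc, Fin.snoc_castSucc]
        exact hm _ _ (by simpa using hst)

lemma chainSum_succ (p k : Fin m) (w : ℕ) :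
    chainSum A p k (w + 1) =
      ∑ r : Fin m, (if r < k then chainSum A p r w else 0) * hcoef A r k := by
  have hL : chainSum A p k (w + 1) =
      ∑ c' : Fin (w + 2) → Fin m,
        if ((∀ s t : Fin (w + 2), s < t → c' s < c' t) ∧ c' (Fin.last (w + 1)) < k)
            ∧ c' 0 = p
        then (∏ s : Fin (w + 1), hcoef A (c' s.castSucc) (c' s.succ)) *
          hcoef A (c' (Fin.last (w + 1))) k else 0 := by
    rw [chainSum, ← (Fin.snocEquiv (fun _ : Fin (w + 3) => Fin m)).sum_comp,
      Fintype.sum_prod_type]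
    simp only [Fin.snocEquiv_apply]
    rw [Fintype.sum_eq_single k (fun r hr => Finset.sum_eq_zero fun c' _ => ?_)]
    · refine Finset.sum_congr rfl fun c' _ => ?_
      have h0 : (Fin.snoc c' k : Fin (w + 3) → Fin m) 0 = c' 0 := by
        have h00 : (0 : Fin (w + 3)) = Fin.castSucc 0 := rfl
        rw [h00, Fin.snoc_castSucc]
      have hlast : (Fin.snoc c' k : Fin (w + 3) → Fin m) (Fin.last (w + 2)) = k :=
        Fin.snoc_last _ _
      refine if_congr ?_ ?_ rfl
      · exact Iff.intro
          (fun ⟨a, b, _⟩ => ⟨(strictMono_snoc_iff c' k).mp a, by rwa [h0] at b⟩)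
          (fun ⟨a, b⟩ => ⟨(strictMono_snoc_iff c' k).mpr a, by rwa [h0], hlast⟩)
      · rw [Fin.prod_univ_castSucc]
        congr 1
        · refine Finset.prod_congr rfl fun s _ => ?_
          rw [Fin.snoc_castSucc, Fin.succ_castSucc, Fin.snoc_castSucc]
        · rw [Fin.snoc_castSucc, Fin.succ_last, Fin.snoc_last]
    · rw [if_neg]
      rintro ⟨-, -, hl⟩
      exact hr (by simpa [Fin.snoc_last] using hl)
  rw [hL]
  have hR : ∀ r : Fin m, (if r < k then chainSum A p r w else 0) * hcoef A r k =
      ∑ c' : Fin (w + 2) → Fin m,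
        (if ((∀ s t : Fin (w + 2), s < t → c' s < c' t) ∧ c' 0 = p ∧
            c' (Fin.last (w + 1)) = r) ∧ r < k
        then (∏ s : Fin (w + 1), hcoef A (c' s.castSucc) (c' s.succ)) *
          hcoef A (c' (Fin.last (w + 1))) k else 0) := by
    intro r
    by_cases hrk : r < k
    · rw [if_pos hrk, chainSum, Finset.sum_mul]
      refine Finset.sum_congr rfl fun c' _ => ?_
      by_cases hc : (∀ s t : Fin (w + 2), s < t → c' s < c' t) ∧ c' 0 = p ∧
          c' (Fin.last (w + 1)) = r
      · rw [if_pos hc, if_pos ⟨hc, hrk⟩, hc.2.2]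
      · rw [if_neg hc, if_neg (fun h => hc h.1), zero_mul]
    · rw [if_neg hrk, zero_mul, eq_comm]
      exact Finset.sum_eq_zero fun c' _ => if_neg (fun h => hrk h.2)
  rw [Finset.sum_congr rfl fun r _ => hR r, Finset.sum_comm]
  refine Finset.sum_congr rfl fun c' _ => ?_
  rw [Fintype.sum_eq_single (c' (Fin.last (w + 1)))
    (fun r hr => if_neg (fun h => hr h.1.2.2.symm))]
  refine if_congr ?_ rfl rfl
  constructor
  · rintro ⟨⟨a, hlt⟩, b⟩; exact ⟨⟨a, b, rfl⟩, hlt⟩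
  · rintro ⟨⟨a, b, -⟩, hlt⟩; exact ⟨⟨a, hlt⟩, b⟩

lemma OmegaMat_diag (p : Fin m) : OmegaMat A p p = 1 := by simp [OmegaMat]

lemma OmegaMat_lower (p q : Fin m) (h : q < p) : OmegaMat A p q = 0 := by
  rw [OmegaMat, if_neg h.ne', if_pos h]

lemma omega_rec (p k : Fin m) (hpk : p < k) :
    OmegaMat A p k =
      ∑ r : Fin m, (if r < k then OmegaMat A p r else 0) * (-(hcoef A r k)) := by
  have hpkv : (p : ℕ) < (k : ℕ) := hpk
  obtain ⟨d, hd⟩ : ∃ d, (k : ℕ) - (p : ℕ) = d + 1 := ⟨(k : ℕ) - (p : ℕ) - 1, by omega⟩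
  have hrd : ∀ r : Fin m, r < k → (r : ℕ) - (p : ℕ) ≤ d := by
    intro r hr
    have : (r : ℕ) < (k : ℕ) := hr
    omega
  have hS : ∀ r : Fin m, r ≠ p → r < k →
      ∑ w ∈ Finset.range d, (-1 : ℝ) ^ w * chainSum A p r w = -OmegaMat A p r := by
    intro r hrp hrk
    rcases lt_trichotomy p r with h | h | h
    · rw [OmegaMat_eq_chain A p r h, ← Finset.sum_subset (Finset.range_subset_range.mpr
        (hrd r hrk)) (fun w _ hw => by
          rw [chainSum_eq_zero A p r w (by simp only [Finset.mem_range, not_lt] at hw; omega),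
            mul_zero])]
      rw [← Finset.sum_neg_distrib]
      refine Finset.sum_congr rfl fun w _ => ?_
      ring
    · exact absurd h.symm hrp
    · rw [OmegaMat_lower A p r h, neg_zero]
      refine Finset.sum_eq_zero fun w _ => ?_
      have : (r : ℕ) < (p : ℕ) := h
      rw [chainSum_eq_zero A p r w (by omega), mul_zero]
  rw [OmegaMat_eq_chain A p k hpk, hd, Finset.sum_range_succ']
  rw [chainSum_zero A p k hpk]
  have step : ∀ w, (-1 : ℝ) ^ (w + 1 + 1) * chainSum A p k (w + 1)
      = ∑ r : Fin m, (if r < k then (-1 : ℝ) ^ w * chainSum A p r w else 0) * hcoef A r k := by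
    intro w
    rw [chainSum_succ, Finset.mul_sum]
    refine Finset.sum_congr rfl fun r _ => ?_
    by_cases h : r < k
    · rw [if_pos h, if_pos h]; ring
    · rw [if_neg h, if_neg h]; ring
  rw [Finset.sum_congr rfl fun w _ => step w, Finset.sum_comm]
  have pull : ∀ r : Fin m,
      (∑ w ∈ Finset.range d, (if r < k then (-1 : ℝ) ^ w * chainSum A p r w else 0)
        * hcoef A r k)
      = (if r < k then ∑ w ∈ Finset.range d, (-1 : ℝ) ^ w * chainSum A p r w else 0)
        * hcoef A r k := by
    intro r
    by_cases h : r < k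
    · simp only [if_pos h, Finset.sum_mul]
    · simp only [if_neg h, zero_mul, Finset.sum_const_zero]
  rw [Finset.sum_congr rfl fun r _ => pull r]
  have split : ∀ r : Fin m,
      (if r < k then OmegaMat A p r else 0) * (-(hcoef A r k))
      = (if r < k then ∑ w ∈ Finset.range d, (-1 : ℝ) ^ w * chainSum A p r w else 0)
          * hcoef A r k
        + (if r = p then -(hcoef A p k) else 0) := by
    intro r
    by_cases hrp : r = p
    · subst hrp
      rw [if_pos rfl, if_pos hpk, if_pos hpk, OmegaMat_diag]
      have : ∑ w ∈ Finset.range d, (-1 : ℝ) ^ w * chainSum A r r w = 0 :=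
        Finset.sum_eq_zero fun w _ => by
          rw [chainSum_eq_zero A r r w (by omega), mul_zero]
      rw [this]; ring
    · rw [if_neg hrp, add_zero]
      by_cases hrk : r < k
      · rw [if_pos hrk, if_pos hrk, hS r hrp hrk]; ring
      · rw [if_neg hrk, if_neg hrk, zero_mul, zero_mul]
  rw [Finset.sum_congr rfl fun r _ => split r, Finset.sum_add_distrib]
  simp [Finset.sum_ite_eq']

lemma omega_key (p k : Fin m) :
    ∑ r : Fin m, (if r < k then OmegaMat A p r else 0) * (-(hcoef A r k)) =
      OmegaMat A p k - (if p = k then 1 else 0) := by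
  rcases lt_trichotomy p k with h | h | h
  · rw [← omega_rec A p k h, if_neg h.ne, sub_zero]
  · subst h
    rw [if_pos rfl, OmegaMat_diag, sub_self]
    refine Finset.sum_eq_zero fun r _ => ?_
    by_cases hr : r < p
    · rw [if_pos hr, OmegaMat_lower A p r hr, zero_mul]
    · rw [if_neg hr, zero_mul]
  · rw [if_neg h.ne', OmegaMat_lower A p k h, sub_zero]
    refine Finset.sum_eq_zero fun r _ => ?_
    by_cases hr : r < k
    · rw [if_pos hr, OmegaMat_lower A p r (hr.trans h), zero_mul]
    · rw [if_neg hr, zero_mul]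

lemma prodAsc_E_apply (i : Fin m) :
    ∀ (t : ℕ), t ≤ (i : ℕ) → ∀ p q : Fin m,
      prodAsc (fun j => if hj : j < (i : ℕ) then
        Efac ⟨j, hj.trans i.isLt⟩ i (-(hcoef A ⟨j, hj.trans i.isLt⟩ i)) else 1) 0 t p q
      = (if p = q then (1 : ℝ) else 0)
        + (if q = i ∧ (p : ℕ) < t then -(hcoef A p i) else 0) := by
  intro t
  induction t with
  | zero => intro _ p q; simp [prodAsc, Matrix.one_apply]
  | succ t ih =>
    intro ht p q
    have htl : t < (i : ℕ) := ht
    set j : Fin m := ⟨t, htl.trans i.isLt⟩ with hj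
    rw [prodAsc, show (0 + t) = t from Nat.zero_add t, dif_pos htl, Efac, Matrix.mul_add,
      Matrix.mul_one, Matrix.add_apply, ih (le_of_lt ht) p q]
    by_cases hq : q = i
    · rw [hq]
      rw [Matrix.mul_single_apply_same, ih (le_of_lt ht) p j]
      have hji : ¬(j = i ∧ (p : ℕ) < t) := by
        rintro ⟨h, -⟩
        have : (j : ℕ) = (i : ℕ) := congrArg Fin.val h
        simp only [hj] at this
        omega
      rw [if_neg hji, add_zero]
      simp only [eq_self_iff_true, true_and]
      by_cases hp : (p : ℕ) < t
      · have hpj : p ≠ j := by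
          intro h
          have : (p : ℕ) = t := congrArg Fin.val h
          omega
        rw [if_neg hpj, zero_mul, add_zero, if_pos hp, if_pos (Nat.lt_succ_of_lt hp)]
      · by_cases hp2 : (p : ℕ) = t
        · have hpj : p = j := Fin.ext hp2
          rw [if_pos hpj, one_mul, if_neg hp, if_pos (by omega : (p : ℕ) < t + 1), hpj]
          ring
        · have hpj : p ≠ j := by
            intro h
            exact hp2 (congrArg Fin.val h)
          rw [if_neg hpj, zero_mul, add_zero, if_neg hp,
            if_neg (by omega : ¬(p : ℕ) < t + 1)]
    · rw [Matrix.mul_single_apply_of_ne (hbj := hq)]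
      simp [hq]

lemma Hfac_apply (i : Fin m) (p q : Fin m) :
    Hfac A i p q = (if p = q then (1 : ℝ) else 0)
      + (if q = i ∧ (p : ℕ) < (i : ℕ) then -(hcoef A p i) else 0) :=
  prodAsc_E_apply A i (i : ℕ) le_rfl p q

lemma prodAsc_Hfac (t : ℕ) (ht : t ≤ m) :
    prodAsc (fun k => if hk : k < m then Hfac A ⟨k, hk⟩ else 1) 0 t
      = fun (p q : Fin m) => if (q : ℕ) < t then OmegaMat A p q else (if p = q then (1 : ℝ) else 0) := by
  induction t with
  | zero =>
    funext p q
    simp [prodAsc, Matrix.one_apply]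
  | succ t ih =>
    have htm : t < m := ht
    set kF : Fin m := ⟨t, htm⟩ with hkF
    funext p q
    rw [prodAsc, show (0 + t) = t from Nat.zero_add t, dif_pos htm,
      Matrix.mul_apply]
    rw [ih (le_of_lt ht)]
    have expand : ∀ r : Fin m,
        (if (r : ℕ) < t then OmegaMat A p r else if p = r then (1 : ℝ) else 0)
          * Hfac A kF r q
        = (if (r : ℕ) < t then OmegaMat A p r else if p = r then (1 : ℝ) else 0)
            * (if r = q then (1 : ℝ) else 0)
          + (if q = kF then
              (if r < kF then OmegaMat A p r else 0) * (-(hcoef A r kF)) else 0) := by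
      intro r
      rw [Hfac_apply, mul_add]
      congr 1
      by_cases hq : q = kF
      · rw [if_pos hq, hq]
        by_cases hr : (r : ℕ) < t
        · have h1 : kF = kF ∧ (r : ℕ) < (kF : ℕ) := ⟨rfl, hr⟩
          have h2 : r < kF := hr
          rw [if_pos h1, if_pos h2, if_pos hr]
        · have h1 : ¬(kF = kF ∧ (r : ℕ) < (kF : ℕ)) := by
            rintro ⟨-, h⟩
            exact hr h
          have h2 : ¬r < kF := fun h => hr h
          rw [if_neg h1, if_neg h2, mul_zero, zero_mul]
      · rw [if_neg hq]
        have h1 : ¬(q = kF ∧ (r : ℕ) < (kF : ℕ)) := fun h => hq h.1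
        rw [if_neg h1, mul_zero]
    rw [Finset.sum_congr rfl fun r _ => expand r, Finset.sum_add_distrib]
    have first : ∑ r : Fin m,
        (if (r : ℕ) < t then OmegaMat A p r else if p = r then (1 : ℝ) else 0)
          * (if r = q then (1 : ℝ) else 0)
        = (if (q : ℕ) < t then OmegaMat A p q else if p = q then (1 : ℝ) else 0) := by
      have hterm : ∀ r : Fin m,
          (if (r : ℕ) < t then OmegaMat A p r else if p = r then (1 : ℝ) else 0)
            * (if r = q then (1 : ℝ) else 0)
          = if r = q then (if (r : ℕ) < t then OmegaMat A p r else
              if p = r then (1 : ℝ) else 0) else 0 := by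
        intro r
        by_cases h : r = q
        · rw [if_pos h, if_pos h, mul_one]
        · rw [if_neg h, if_neg h, mul_zero]
      rw [Finset.sum_congr rfl fun r _ => hterm r]
      simp
    rw [first]
    by_cases hq : q = kF
    · rw [Finset.sum_congr rfl fun r _ => if_pos hq, omega_key]
      have hqv : (q : ℕ) = t := by rw [hq]
      rw [if_neg (by omega : ¬(q : ℕ) < t), if_pos (by omega : (q : ℕ) < t + 1), hq]
      ring
    · rw [Finset.sum_congr rfl fun r _ => if_neg hq, Finset.sum_const_zero, add_zero]
      have : ((q : ℕ) < t + 1) ↔ ((q : ℕ) < t) := by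
        constructor
        · intro h
          rcases Nat.lt_succ_iff_lt_or_eq.mp h with h' | h'
          · exact h'
          · exact absurd (Fin.ext h' : q = kF) hq
        · omega
      rw [if_congr this rfl rfl]

end ChainAux

/-- `Ω = H_1 H_2 ⋯ H_m`. -/
theorem stmt11 {m n : ℕ} (A : Matrix (Fin m) (Fin n) ℝ) (hA : ∀ i, A i ≠ 0) :
    OmegaMat A = prodAsc (fun k => if hk : k < m then Hfac A ⟨k, hk⟩ else 1) 0 m := by
  rw [prodAsc_Hfac A m le_rfl]
  funext p q
  exact (if_pos q.isLt).symm
end
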